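/- For a single category: let w : I → ℝ≥0 and h ∈ ℕ≥1, and define g(S) = sum of the min(h,|S|) largest values of w on S. Then g is submodular: for A ⊆ B ⊆ I and e ∉ B, g(A ∪ {e}) − g(A) ≥ g(B ∪ {e}) − g(B). -/

import Mathlib

open Finset

/-- Sum of the `k` largest elements of a finite multiset of reals
(all elements if fewer than `k`). -/
noncomputable def topSum (k : ℕ) (M : Multiset ℝ) : ℝ :=
  ((M.sort (· ≥ ·)).take k).sum

/-- Single-category top-`h` sum of weights `w` over a finite set `S`. -/
noncomputable def topSet {I : Type*} (w : I → ℝ) (h : ℕ) (S : Finset I) : ℝ :=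
  topSum h (S.val.map w)

/-- The `h`-th largest value of `w` on `S` (meaningful when `h ≤ S.card`). -/
noncomputable def kthLargest {I : Type*} (w : I → ℝ) (h : ℕ) (S : Finset I) : ℝ :=
  ((S.val.map w).sort (· ≥ ·)).getD (h - 1) 0

namespace TopHAux

/-- default-0 getD is nonneg on nonneg lists -/
lemma getD_nonneg {l : List ℝ} (hl : ∀ y ∈ l, 0 ≤ y) (i : ℕ) : 0 ≤ l.getD i 0 := by
  by_cases hi : i < l.length
  · rw [List.getD_eq_getElem _ _ hi]; exact hl _ (l.getElem_mem hi)
  · rw [List.getD_eq_default _ _ (le_of_not_gt hi)]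

lemma getD_le_head {a : ℝ} {l : List ℝ} (hs : List.Pairwise (· ≥ ·) (a :: l))
    (ha : 0 ≤ a) (i : ℕ) : (a :: l).getD i 0 ≤ a := by
  by_cases hi : i < (a :: l).length
  · rw [List.getD_eq_getElem _ _ hi]
    have hmem : (a :: l)[i] ∈ a :: l := List.getElem_mem hi
    rcases List.mem_cons.mp hmem with h | h
    · rw [h]
    · exact List.rel_of_pairwise_cons hs h
  · rw [List.getD_eq_default _ _ (le_of_not_gt hi)]; exact ha

lemma getD_antitone {l : List ℝ} (hs : List.Pairwise (· ≥ ·) l) (hl : ∀ y ∈ l, 0 ≤ y)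
    (i : ℕ) : l.getD (i + 1) 0 ≤ l.getD i 0 := by
  by_cases hi : i + 1 < l.length
  · rw [List.getD_eq_getElem _ _ hi, List.getD_eq_getElem _ _ (Nat.lt_of_succ_lt hi)]
    exact hs.rel_get_of_lt (a := ⟨i, Nat.lt_of_succ_lt hi⟩) (b := ⟨i+1, hi⟩) (Nat.lt_succ_self i)
  · rw [List.getD_eq_default _ _ (le_of_not_gt hi)]
    exact getD_nonneg hl i

/-- key identity: top-(k+1) sum after ordered insert -/
lemma sum_take_orderedInsert {x : ℝ} (hx : 0 ≤ x) :
    ∀ (l : List ℝ), List.Pairwise (· ≥ ·) l → (∀ y ∈ l, 0 ≤ y) → ∀ k : ℕ,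
    ((List.orderedInsert (· ≥ ·) x l).take (k + 1)).sum
      = (l.take k).sum + max x (l.getD k 0) := by
  intro l
  induction l with
  | nil =>
    intro _ _ k
    simp [List.orderedInsert, max_eq_left hx]
  | cons a t ih =>
    intro hs hnn k
    have hsa : List.Pairwise (· ≥ ·) t := (List.pairwise_cons.mp hs).2
    have hnt : ∀ y ∈ t, 0 ≤ y := fun y hy => hnn y (List.mem_cons_of_mem a hy)
    have ha : 0 ≤ a := hnn a (List.mem_cons_self)
    by_cases hxa : x ≥ a
    · rw [List.orderedInsert_cons_of_le _ _ hxa]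
      have : max x ((a :: t).getD k 0) = x :=
        max_eq_left (le_trans (getD_le_head hs ha k) hxa)
      rw [this]
      simp [List.sum_cons, add_comm]
    · have : List.orderedInsert (· ≥ ·) x (a :: t) = a :: List.orderedInsert (· ≥ ·) x t := by
        simp [List.orderedInsert, hxa]
      rw [this]
      cases k with
      | zero =>
        simp [max_eq_right (le_of_lt (lt_of_not_ge hxa))]
      | succ k =>
        rw [List.take_succ_cons, List.sum_cons, ih hsa hnt k, List.take_succ_cons,
          List.sum_cons, List.getD_cons_succ]
        ring

lemma sum_take_succ (l : List ℝ) (k : ℕ) :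
    (l.take (k + 1)).sum = (l.take k).sum + l.getD k 0 := by
  by_cases hk : k < l.length
  · rw [List.getD_eq_getElem _ _ hk]
    rw [List.sum_take_succ l k hk]
  · push_neg at hk
    rw [List.getD_eq_default _ _ hk, List.take_of_length_le hk,
      List.take_of_length_le (le_trans hk (Nat.le_succ k)), add_zero]

lemma getD_orderedInsert {x : ℝ} (hx : 0 ≤ x) :
    ∀ (l : List ℝ), List.Pairwise (· ≥ ·) l → (∀ y ∈ l, 0 ≤ y) → ∀ i : ℕ,
    l.getD i 0 ≤ (List.orderedInsert (· ≥ ·) x l).getD i 0 := by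
  intro l
  induction l with
  | nil =>
    intro _ _ i
    simp only [List.getD_nil]
    exact getD_nonneg (by rintro y hy; simp [List.orderedInsert] at hy; simpa [hy]) i
  | cons a t ih =>
    intro hs hnn i
    have hsa : List.Pairwise (· ≥ ·) t := (List.pairwise_cons.mp hs).2
    have hnt : ∀ y ∈ t, 0 ≤ y := fun y hy => hnn y (List.mem_cons_of_mem a hy)
    have ha : 0 ≤ a := hnn a (List.mem_cons_self)
    by_cases hxa : x ≥ a
    · rw [List.orderedInsert_cons_of_le _ _ hxa]
      cases i with
      | zero => simpa using hxa
      | succ i =>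
        rw [List.getD_cons_succ]
        exact le_trans (getD_antitone hs hnn i) (by rw [List.getD_cons_succ])|>.trans_eq rfl
    · have : List.orderedInsert (· ≥ ·) x (a :: t) = a :: List.orderedInsert (· ≥ ·) x t := by
        simp [List.orderedInsert, hxa]
      rw [this]
      cases i with
      | zero => simp
      | succ i => simpa using ih hsa hnt i

/-- sort of a cons is orderedInsert into the sort -/
lemma sort_cons_eq (x : ℝ) (M : Multiset ℝ) :
    (x ::ₘ M).sort (· ≥ ·) = List.orderedInsert (· ≥ ·) x (M.sort (· ≥ ·)) := by
  refine List.Perm.eq_of_pairwise' (Multiset.pairwise_sort _ _)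
    ((Multiset.pairwise_sort M _).orderedInsert x _) ?_
  · rw [← Multiset.coe_eq_coe]
    have h1 : ((x ::ₘ M).sort (· ≥ ·) : Multiset ℝ) = x ::ₘ M := Multiset.sort_eq _ _
    have h2 : (List.orderedInsert (· ≥ ·) x (M.sort (· ≥ ·)) : Multiset ℝ)
        = x ::ₘ (M.sort (· ≥ ·) : Multiset ℝ) := by
      exact Quot.sound (List.perm_orderedInsert _ x _)
    rw [h1, h2, Multiset.sort_eq]

lemma getD_cons_le (a : ℝ) (ha : 0 ≤ a) (M : Multiset ℝ) (hnn : ∀ y ∈ M, 0 ≤ y) (i : ℕ) :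
    (M.sort (· ≥ ·)).getD i 0 ≤ ((a ::ₘ M).sort (· ≥ ·)).getD i 0 := by
  rw [sort_cons_eq]
  exact getD_orderedInsert ha _ (Multiset.pairwise_sort _ _)
    (fun y hy => hnn y ((Multiset.mem_sort _).mp hy)) i

lemma getD_add (D : Multiset ℝ) : ∀ (M : Multiset ℝ), (∀ y ∈ M + D, 0 ≤ y) → ∀ i : ℕ,
    (M.sort (· ≥ ·)).getD i 0 ≤ ((M + D).sort (· ≥ ·)).getD i 0 := by
  induction D using Multiset.induction with
  | empty => intro M _ i; simp
  | cons a D ih =>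
    intro M hnn i
    have h1 : M + a ::ₘ D = (a ::ₘ M) + D := by
      rw [Multiset.add_cons, Multiset.cons_add]
    rw [h1] at hnn ⊢
    have ha : 0 ≤ a := hnn a (by simp)
    exact le_trans (getD_cons_le a ha M (fun y hy => hnn y (by simp [hy])) i)
      (ih (a ::ₘ M) hnn i)

lemma getD_mono {M N : Multiset ℝ} (hMN : M ≤ N) (hnn : ∀ y ∈ N, 0 ≤ y) (i : ℕ) :
    (M.sort (· ≥ ·)).getD i 0 ≤ (N.sort (· ≥ ·)).getD i 0 := by
  obtain ⟨D, rfl⟩ := Multiset.le_iff_exists_add.mp hMN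
  exact getD_add D M hnn i

end TopHAux

theorem top_h_single_category_submodular {I : Type*} [Fintype I] [DecidableEq I]
    (w : I → ℝ) (hw : ∀ v, 0 ≤ w v) (h : ℕ) (hh : 1 ≤ h)
    (A B : Finset I) (hAB : A ⊆ B) (e : I) (he : e ∉ B) :
    topSet w h (insert e A) - topSet w h A ≥
      topSet w h (insert e B) - topSet w h B := by
  obtain ⟨k, rfl⟩ : ∃ k, h = k + 1 := ⟨h - 1, (Nat.succ_pred_eq_of_pos hh).symm⟩
  have heA : e ∉ A := fun hA => he (hAB hA)
  -- sorted lists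
  set lA := (A.val.map w).sort (· ≥ ·) with hlA
  set lB := (B.val.map w).sort (· ≥ ·) with hlB
  have hsA : List.Pairwise (· ≥ ·) lA := Multiset.pairwise_sort _ _
  have hsB : List.Pairwise (· ≥ ·) lB := Multiset.pairwise_sort _ _
  have hnnA : ∀ y ∈ lA, 0 ≤ y := by
    intro y hy
    rw [hlA, Multiset.mem_sort] at hy
    obtain ⟨v, _, rfl⟩ := Multiset.mem_map.mp hy
    exact hw v
  have hnnB : ∀ y ∈ lB, 0 ≤ y := by
    intro y hy
    rw [hlB, Multiset.mem_sort] at hy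
    obtain ⟨v, _, rfl⟩ := Multiset.mem_map.mp hy
    exact hw v
  have keyA : topSet w (k+1) (insert e A) = (lA.take k).sum + max (w e) (lA.getD k 0) := by
    rw [topSet, Finset.insert_val_of_notMem heA, Multiset.map_cons, topSum,
      TopHAux.sort_cons_eq]
    exact TopHAux.sum_take_orderedInsert (hw e) lA hsA hnnA k
  have keyB : topSet w (k+1) (insert e B) = (lB.take k).sum + max (w e) (lB.getD k 0) := by
    rw [topSet, Finset.insert_val_of_notMem he, Multiset.map_cons, topSum,
      TopHAux.sort_cons_eq]
    exact TopHAux.sum_take_orderedInsert (hw e) lB hsB hnnB k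
  have valA : topSet w (k+1) A = (lA.take k).sum + lA.getD k 0 :=
    TopHAux.sum_take_succ lA k
  have valB : topSet w (k+1) B = (lB.take k).sum + lB.getD k 0 :=
    TopHAux.sum_take_succ lB k
  -- monotonicity of the k-th largest
  have hmono : lA.getD k 0 ≤ lB.getD k 0 := by
    have hle : A.val.map w ≤ B.val.map w :=
      Multiset.map_le_map (Finset.val_le_iff.mpr hAB)
    have hnn : ∀ y ∈ B.val.map w, 0 ≤ y := by
      intro y hy; obtain ⟨v, _, rfl⟩ := Multiset.mem_map.mp hy; exact hw v
    exact TopHAux.getD_mono hle hnn k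
  have hmax : ∀ t : ℝ, max (w e) t - t = max (w e - t) 0 := by
    intro t
    rcases le_total (w e) t with h1 | h1
    · rw [max_eq_right h1, max_eq_right (by linarith), sub_self]
    · rw [max_eq_left h1, max_eq_left (by linarith)]
  calc topSet w (k+1) (insert e B) - topSet w (k+1) B
      = max (w e) (lB.getD k 0) - lB.getD k 0 := by rw [keyB, valB]; ring
    _ = max (w e - lB.getD k 0) 0 := hmax _
    _ ≤ max (w e - lA.getD k 0) 0 := max_le_max (by linarith) le_rfl
    _ = max (w e) (lA.getD k 0) - lA.getD k 0 := (hmax _).symm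
    _ = topSet w (k+1) (insert e A) - topSet w (k+1) A := by rw [keyA, valA]; ring
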